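/- For every reflection coefficient Γ > 0, every wavenumber k' > 0 and every length L > 0, there exist a loss coefficient α > 0 and a threshold T > 0 such that, setting k = k' + iα, c = Γ·exp(−αL) and u(x) = exp(i k x) + c·exp(−i k (x − L)), the super-level set {x ∈ [0, L] : |u(x)| > T} is a connected subset of ℝ and contains the point 0. -/

import Mathlib

/-- The interfering traveling-wave field
`u(x) = exp(i k x) + c · exp(−i k (x − L))` with `k = k' + iα` and
`c = Γ · exp(−αL)`. -/
noncomputable def travelingField (Γ k' L α x : ℝ) : ℂ :=
  Complex.exp (Complex.I * ((k' : ℂ) + (α : ℂ) * Complex.I) * (x : ℂ)) +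
    ((Γ * Real.exp (-α * L) : ℝ) : ℂ) *
      Complex.exp (-(Complex.I * ((k' : ℂ) + (α : ℂ) * Complex.I) * ((x : ℂ) - (L : ℂ))))

noncomputable def fprof (Γ k' L α x : ℝ) : ℝ :=
  Real.exp (-(2*α*x)) + Γ^2 * Real.exp (2*α*x - 4*(α*L))
    + (2*Γ*Real.exp (-(2*(α*L)))) * Real.cos (2*(k'*x) - k'*L)

lemma fprof_hasDeriv (Γ k' L α : ℝ) (x : ℝ) :
    HasDerivAt (fun y => fprof Γ k' L α y)
      (-(2*α) * Real.exp (-(2*α*x)) + Γ^2 * ((2*α) * Real.exp (2*α*x - 4*(α*L)))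
        + (2*Γ*Real.exp (-(2*(α*L)))) * (-(Real.sin (2*(k'*x) - k'*L)) * (2*k'))) x := by
  have d1 : HasDerivAt (fun y : ℝ => Real.exp (-(2*α*y))) (Real.exp (-(2*α*x)) * -(2*α*1)) x :=
    (((hasDerivAt_id x).const_mul (2*α)).neg).exp
  have d2 : HasDerivAt (fun y : ℝ => Real.exp (2*α*y - 4*(α*L)))
      (Real.exp (2*α*x - 4*(α*L)) * (2*α*1)) x :=
    (((hasDerivAt_id x).const_mul (2*α)).sub_const (4*(α*L))).exp
  have inner : HasDerivAt (fun y : ℝ => 2*(k'*y) - k'*L) (2*k') x := by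
    have := ((hasDerivAt_id x).const_mul (2*k')).sub_const (k'*L)
    simpa [mul_assoc] using this
  have d3 := inner.cos
  have := (d1.add (d2.const_mul (Γ^2))).add (d3.const_mul (2*Γ*Real.exp (-(2*(α*L)))))
  unfold fprof
  refine this.congr_deriv ?_
  ring

lemma fprof_anti (Γ k' L α : ℝ) (hΓ : 0 < Γ) (hk' : 0 < k') (hL : 0 < L)
    (hα1 : 4*k'*Γ + 1 ≤ α)
    (heδ : Real.exp (-(α*L)) ≤ 1/(4*(1+Γ)^2)) :
    AntitoneOn (fun y => fprof Γ k' L α y) (Set.Icc 0 (L/2)) := by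
  have hαpos : 0 < α := lt_of_lt_of_le (by positivity) hα1
  set e : ℝ := Real.exp (-(α*L)) with hedef
  have hepos : 0 < e := Real.exp_pos _
  have hδ1 : 1/(4*(1+Γ)^2) ≤ 1 := by
    rw [div_le_one (by positivity)]; nlinarith
  have he1 : e ≤ 1 := heδ.trans hδ1
  have he2 : Real.exp (-(2*(α*L))) = e^2 := by
    rw [hedef, ← Real.exp_nat_mul]; congr 1; push_cast; ring
  have hΓe : Γ^2 * e^2 ≤ 1/4 := by
    have h1 : Γ^2 * e^2 ≤ Γ^2 * (1/(4*(1+Γ)^2))^2 := by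
      gcongr
    have h2 : Γ^2 * (1/(4*(1+Γ)^2))^2 ≤ 1/4 := by
      rw [div_pow, one_pow, mul_one_div, div_le_div_iff₀ (by positivity) (by norm_num)]
      nlinarith [sq_nonneg Γ, sq_nonneg (1+Γ), sq_nonneg ((1+Γ)^2), sq_nonneg (Γ*(1+Γ))]
    linarith
  apply antitoneOn_of_deriv_nonpos (convex_Icc 0 (L/2))
  · exact fun x _ => (fprof_hasDeriv Γ k' L α x).differentiableAt.continuousAt.continuousWithinAt
  · exact fun x _ => (fprof_hasDeriv Γ k' L α x).differentiableAt.differentiableWithinAt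
  · intro x hx
    rw [interior_Icc] at hx
    rw [(fprof_hasDeriv Γ k' L α x).deriv]
    have hx0 : 0 ≤ x := hx.1.le
    have hxL : x ≤ L/2 := hx.2.le
    have hE1 : e ≤ Real.exp (-(2*α*x)) := by
      apply Real.exp_le_exp.mpr; nlinarith
    have hE2 : Real.exp (2*α*x - 4*(α*L)) ≤ e^3 := by
      rw [hedef, ← Real.exp_nat_mul]
      apply Real.exp_le_exp.mpr
      push_cast
      nlinarith
    have hsin : -(Real.sin (2*(k'*x) - k'*L)) ≤ 1 := by
      have := Real.neg_one_le_sin (2*(k'*x) - k'*L); linarith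
    have h1 : Γ^2 * ((2*α) * Real.exp (2*α*x - 4*(α*L))) ≤ (α/2) * e := by
      have ha : Γ^2 * ((2*α) * Real.exp (2*α*x - 4*(α*L))) ≤ Γ^2 * ((2*α) * e^3) := by
        gcongr
      have hb : Γ^2*e^2*(2*α*e) ≤ (1/4)*(2*α*e) :=
        mul_le_mul_of_nonneg_right hΓe (by positivity)
      nlinarith [ha, hb]
    have h2 : (2*Γ*Real.exp (-(2*(α*L)))) * (-(Real.sin (2*(k'*x) - k'*L)) * (2*k')) ≤ 4*k'*Γ*e^2 := by
      rw [he2]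
      have hpos : (0:ℝ) ≤ 2*Γ*e^2 * (2*k') := by positivity
      nlinarith
    have h3 : -(2*α) * Real.exp (-(2*α*x)) ≤ -(2*α)*e := by nlinarith
    have h4 : 4*k'*Γ*e^2 ≤ α*e := by
      have h41 : 4*k'*Γ*e ≤ α := by nlinarith
      calc 4*k'*Γ*e^2 = (4*k'*Γ*e)*e := by ring
        _ ≤ α*e := mul_le_mul_of_nonneg_right h41 hepos.le
    have h5 : 0 < α*e := mul_pos hαpos hepos
    linarith

lemma fprof_zero (Γ k' L α : ℝ) (hΓ : 0 < Γ)
    (heδ : Real.exp (-(α*L)) ≤ 1/(4*(1+Γ)^2)) :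
    1/2 < fprof Γ k' L α 0 := by
  unfold fprof
  set e : ℝ := Real.exp (-(α*L)) with hedef
  have hepos : 0 < e := Real.exp_pos _
  have he2 : Real.exp (-(2*(α*L))) = e^2 := by
    rw [hedef, ← Real.exp_nat_mul]; congr 1; push_cast; ring
  have h1 : Real.exp (-(2*α*0)) = 1 := by norm_num
  have hc : -1 ≤ Real.cos (2*(k'*0) - k'*L) := Real.neg_one_le_cos _
  have h2 : (0:ℝ) < Real.exp (2*α*0 - 4*(α*L)) := Real.exp_pos _
  have hΓe : 2*Γ*e^2 ≤ 1/4 := by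
    have hδ1 : 1/(4*(1+Γ)^2) ≤ 1 := by
      rw [div_le_one (by positivity)]; nlinarith
    have ha : 2*Γ*e^2 ≤ 2*Γ*(1/(4*(1+Γ)^2))^2 := by gcongr
    have hb : 2*Γ*(1/(4*(1+Γ)^2))^2 ≤ 1/4 := by
      rw [div_pow, one_pow, mul_one_div, div_le_div_iff₀ (by positivity) (by norm_num)]
      nlinarith [sq_nonneg (1+Γ), sq_nonneg ((1+Γ)^2), sq_nonneg (1 - Γ), sq_nonneg Γ]
    linarith
  rw [h1, he2]
  nlinarith [mul_nonneg (sq_nonneg Γ) h2.le, mul_pos (mul_pos (by norm_num : (0:ℝ)<2) hΓ) (mul_pos hepos hepos)]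

lemma fprof_big (Γ k' L α : ℝ) (hΓ : 0 < Γ) (hL : 0 < L) (hαpos : 0 < α)
    (heδ : Real.exp (-(α*L)) ≤ 1/(4*(1+Γ)^2)) (x : ℝ) (hx : x ∈ Set.Icc (L/2) L) :
    fprof Γ k' L α x ≤ 1/4 := by
  unfold fprof
  set e : ℝ := Real.exp (-(α*L)) with hedef
  have hepos : 0 < e := Real.exp_pos _
  have hδ1 : 1/(4*(1+Γ)^2) ≤ 1 := by
    rw [div_le_one (by positivity)]; nlinarith
  have he1 : e ≤ 1 := heδ.trans hδ1
  have he2 : Real.exp (-(2*(α*L))) = e^2 := by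
    rw [hedef, ← Real.exp_nat_mul]; congr 1; push_cast; ring
  have hE1 : Real.exp (-(2*α*x)) ≤ e := by
    apply Real.exp_le_exp.mpr; nlinarith [hx.1]
  have hE2 : Real.exp (2*α*x - 4*(α*L)) ≤ e^2 := by
    rw [hedef, ← Real.exp_nat_mul]
    apply Real.exp_le_exp.mpr
    push_cast
    nlinarith [hx.2]
  have hc : Real.cos (2*(k'*x) - k'*L) ≤ 1 := Real.cos_le_one _
  rw [he2]
  have h1 : Γ^2 * Real.exp (2*α*x - 4*(α*L)) ≤ Γ^2 * e^2 := by gcongr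
  have h2 : (2*Γ*e^2) * Real.cos (2*(k'*x) - k'*L) ≤ 2*Γ*e^2 := by
    nlinarith [mul_pos (mul_pos (by norm_num : (0:ℝ)<2) hΓ) (mul_pos hepos hepos)]
  have hee : e^2 ≤ e := by nlinarith
  have h3 : e + Γ^2*e^2 + 2*Γ*e^2 ≤ e*(1+Γ)^2 := by
    nlinarith [mul_le_mul_of_nonneg_left hee (sq_nonneg Γ),
      mul_le_mul_of_nonneg_left hee (by positivity : (0:ℝ) ≤ 2*Γ)]
  have h4 : e*(1+Γ)^2 ≤ (1/(4*(1+Γ)^2))*(1+Γ)^2 := by gcongr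
  have h5 : (1/(4*(1+Γ)^2))*(1+Γ)^2 = 1/4 := by field_simp
  linarith

lemma absSq (Γ k' L α x : ℝ) :
    ‖travelingField Γ k' L α x‖ ^ 2 =
      Real.exp (-(2*α*x)) + Γ^2 * Real.exp (2*α*x - 4*(α*L))
        + (2*Γ*Real.exp (-(2*(α*L)))) * Real.cos (2*(k'*x) - k'*L) := by
  set z1 : ℂ := Complex.I * ((k' : ℂ) + (α : ℂ) * Complex.I) * (x : ℂ) with hz1
  set z2 : ℂ := -(Complex.I * ((k' : ℂ) + (α : ℂ) * Complex.I) * ((x : ℂ) - (L : ℂ))) with hz2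
  set c : ℝ := Γ * Real.exp (-α * L) with hc
  rw [travelingField, Complex.sq_norm, Complex.normSq_add]
  have hre1 : z1.re = -(α*x) := by simp [hz1, Complex.add_re, Complex.mul_re, Complex.mul_im]
  have hre2 : z2.re = α*(x-L) := by simp [hz2, Complex.add_re, Complex.mul_re, Complex.mul_im]
  have h1 : Complex.normSq (Complex.exp z1) = Real.exp (-(2*α*x)) := by
    rw [Complex.normSq_eq_norm_sq, Complex.norm_exp, ← Real.exp_nat_mul, hre1]
    norm_num; ring_nf
  have h2 : Complex.normSq (((c:ℝ):ℂ) * Complex.exp z2) = Γ^2 * Real.exp (2*α*x - 4*(α*L)) := by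
    rw [Complex.normSq_mul, Complex.normSq_ofReal, Complex.normSq_eq_norm_sq, Complex.norm_exp,
      ← Real.exp_nat_mul, hre2, hc]
    push_cast
    have hE : Real.exp (-α*L) * Real.exp (-α*L) * Real.exp (2*(α*(x-L))) = Real.exp (2*α*x - 4*(α*L)) := by
      rw [← Real.exp_add, ← Real.exp_add]; ring_nf
    linear_combination Γ^2 * hE
  have h3 : (Complex.exp z1 * (starRingEnd ℂ) (((c:ℝ):ℂ) * Complex.exp z2)).re
      = c * Real.exp (-(α*L)) * Real.cos (2*(k'*x) - k'*L) := by
    rw [map_mul, Complex.conj_ofReal, ← Complex.exp_conj]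
    have : z1 + (starRingEnd ℂ) z2 = ((-(α*L) : ℝ) : ℂ) + ((2*(k'*x) - k'*L : ℝ):ℂ) * Complex.I := by
      rw [hz1, hz2]
      push_cast
      simp [Complex.ext_iff, Complex.add_re, Complex.mul_re, Complex.mul_im]
      constructor <;> ring
    calc (Complex.exp z1 * (((c:ℝ):ℂ) * Complex.exp ((starRingEnd ℂ) z2))).re
        = (((c:ℝ):ℂ) * Complex.exp (z1 + (starRingEnd ℂ) z2)).re := by
          rw [Complex.exp_add]; ring_nf
      _ = c * (Complex.exp (z1 + (starRingEnd ℂ) z2)).re := by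
          rw [Complex.mul_re]; simp
      _ = _ := by
          rw [this, Complex.exp_re]
          simp
          ring
  rw [h1, h2, h3, hc]
  have he : Real.exp (-α*L) * Real.exp (-(α*L)) = Real.exp (-(2*(α*L))) := by
    rw [← Real.exp_add]; ring_nf
  linear_combination (2*Γ*Real.cos (2*(k'*x) - k'*L)) * he

lemma absSq' (Γ k' L α x : ℝ) :
    ‖travelingField Γ k' L α x‖ ^ 2 = fprof Γ k' L α x := by
  rw [absSq]; rfl

/-- For every reflection coefficient `Γ > 0`, wavenumber `k' > 0` and length `L > 0`,
there exist a loss coefficient `α > 0` and a threshold `T > 0` such that the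
super-level set `{x ∈ [0, L] : |u(x)| > T}` is a connected subset of `ℝ`
containing `0`. -/
theorem traveling_interference_connected_superlevel
    (Γ k' L : ℝ) (hΓ : 0 < Γ) (hk' : 0 < k') (hL : 0 < L) :
    ∃ α T : ℝ, 0 < α ∧ 0 < T ∧
      IsConnected {x : ℝ | x ∈ Set.Icc 0 L ∧ T < ‖travelingField Γ k' L α x‖} ∧
      (0 : ℝ) ∈ {x : ℝ | x ∈ Set.Icc 0 L ∧ T < ‖travelingField Γ k' L α x‖} := by
  obtain ⟨α, hα1, heδ⟩ : ∃ α : ℝ, 4*k'*Γ + 1 ≤ α ∧ Real.exp (-(α*L)) ≤ 1/(4*(1+Γ)^2) := by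
    refine ⟨max (4*k'*Γ + 1) (Real.log (4*(1+Γ)^2) / L), le_max_left _ _, ?_⟩
    have h4 : (0:ℝ) < 4*(1+Γ)^2 := by positivity
    have hlog : Real.log (4*(1+Γ)^2) ≤ (max (4*k'*Γ + 1) (Real.log (4*(1+Γ)^2) / L)) * L := by
      calc Real.log (4*(1+Γ)^2) = (Real.log (4*(1+Γ)^2)/L)*L := by field_simp
        _ ≤ _ := mul_le_mul_of_nonneg_right (le_max_right _ _) hL.le
    calc Real.exp (-(max (4*k'*Γ + 1) (Real.log (4*(1+Γ)^2) / L) * L))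
        ≤ Real.exp (-(Real.log (4*(1+Γ)^2))) := Real.exp_le_exp.mpr (by linarith)
      _ = 1/(4*(1+Γ)^2) := by rw [Real.exp_neg, Real.exp_log h4, one_div]
  have hαpos : 0 < α := lt_of_lt_of_le (by positivity) hα1
  have hiff : ∀ x : ℝ, Real.sqrt (1/2) < ‖travelingField Γ k' L α x‖
      ↔ 1/2 < fprof Γ k' L α x := by
    intro x
    rw [← absSq']
    constructor
    · intro h
      have h0 : 0 < ‖travelingField Γ k' L α x‖ :=
        lt_of_le_of_lt (Real.sqrt_nonneg _) h
      exact (Real.sqrt_lt' h0).mp h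
    · intro h
      have h0 : 0 < ‖travelingField Γ k' L α x‖ := by
        by_contra hc
        push_neg at hc
        have hz : ‖travelingField Γ k' L α x‖ = 0 :=
          le_antisymm hc (norm_nonneg _)
        rw [hz] at h; norm_num at h
      exact (Real.sqrt_lt' h0).mpr h
  refine ⟨α, Real.sqrt (1/2), hαpos, Real.sqrt_pos.mpr (by norm_num), ?_, ?_⟩
  · -- connectedness
    have h0mem : (0:ℝ) ∈ {x : ℝ | x ∈ Set.Icc 0 L ∧
        Real.sqrt (1/2) < ‖travelingField Γ k' L α x‖} :=
      ⟨⟨le_refl 0, hL.le⟩, (hiff 0).mpr (fprof_zero Γ k' L α hΓ heδ)⟩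
    have hsub : ∀ x ∈ {x : ℝ | x ∈ Set.Icc 0 L ∧
        Real.sqrt (1/2) < ‖travelingField Γ k' L α x‖}, x ≤ L/2 := by
      intro x hx
      by_contra hc
      push_neg at hc
      have hb := fprof_big Γ k' L α hΓ hL hαpos heδ x ⟨hc.le, hx.1.2⟩
      have := (hiff x).mp hx.2
      linarith
    have hanti := fprof_anti Γ k' L α hΓ hk' hL hα1 heδ
    have hoc : Set.OrdConnected {x : ℝ | x ∈ Set.Icc 0 L ∧
        Real.sqrt (1/2) < ‖travelingField Γ k' L α x‖} := by
      constructor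
      intro y hy z hz x hx
      have hy2 := hsub y hy
      have hz2 := hsub z hz
      have hx0 : 0 ≤ x := le_trans hy.1.1 hx.1
      have hxz : x ≤ z := hx.2
      have hxmem : x ∈ Set.Icc (0:ℝ) (L/2) := ⟨hx0, le_trans hxz hz2⟩
      have hzmem : z ∈ Set.Icc (0:ℝ) (L/2) := ⟨hz.1.1, hz2⟩
      have hfa : fprof Γ k' L α z ≤ fprof Γ k' L α x := hanti hxmem hzmem hxz
      have hfz := (hiff z).mp hz.2
      exact ⟨⟨hx0, le_trans hxz hz.1.2⟩, (hiff x).mpr (by linarith)⟩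
    exact ⟨⟨0, h0mem⟩, hoc.isPreconnected⟩
  · exact ⟨⟨le_refl 0, hL.le⟩, (hiff 0).mpr (fprof_zero Γ k' L α hΓ heδ)⟩
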